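/- Let k ≥ 1, ε ∈ (0,1], and let f: {0,1}^n → {0,1} be k-alternating. Then the Fourier tail of f beyond degree k√n/ε is small: ∑_{S ⊆ [n], |S| > k√n/ε} F̂(S)² ≤ ε, where F = (−1)^f. -/

import Mathlib

/-- Number of alternations of `f` along the chain `X` of `ℓ+1` points:
the number of indices `j` with `f (X j) ≠ f (X (j+1))`. -/
def altCount {n : ℕ} (f : (Fin n → Bool) → Bool) {ℓ : ℕ}
    (X : Fin (ℓ + 1) → (Fin n → Bool)) : ℕ :=
  (Finset.univ.filter (fun j : Fin ℓ => f (X j.castSucc) ≠ f (X j.succ))).card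

/-- `a_f(x)`: the maximum number of alternations of `f` over all
(strictly increasing) chains in `{0,1}^n` starting at `x`. -/
noncomputable def altFrom {n : ℕ} (f : (Fin n → Bool) → Bool) (x : Fin n → Bool) : ℕ :=
  sSup {k | ∃ (ℓ : ℕ) (X : Fin (ℓ + 1) → (Fin n → Bool)),
    StrictMono X ∧ X 0 = x ∧ altCount f X = k}

/-- `a(f)`: the maximum number of alternations of `f` over all
(strictly increasing) chains in `{0,1}^n`. -/
noncomputable def alt {n : ℕ} (f : (Fin n → Bool) → Bool) : ℕ :=
  sSup {k | ∃ (ℓ : ℕ) (X : Fin (ℓ + 1) → (Fin n → Bool)),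
    StrictMono X ∧ altCount f X = k}

/-- Fourier coefficient `F̂(S)` of `F = (-1)^f`. -/
noncomputable def booleanFourier {n : ℕ} (f : (Fin n → Bool) → Bool) (S : Finset (Fin n)) : ℝ :=
  (∑ x : Fin n → Bool,
      (if f x then (-1 : ℝ) else 1) * ∏ i ∈ S, (if x i then (-1 : ℝ) else 1)) / 2 ^ n


namespace Stmt12Aux

variable {n : ℕ}

noncomputable def chi (S : Finset (Fin n)) (x : Fin n → Bool) : ℝ :=
  ∏ i ∈ S, (if x i then (-1 : ℝ) else 1)

noncomputable def four (F : (Fin n → Bool) → ℝ) (S : Finset (Fin n)) : ℝ :=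
  (∑ x, F x * chi S x) / 2 ^ n

lemma sum_chi_mul (x y : Fin n → Bool) :
    ∑ S : Finset (Fin n), chi S x * chi S y = if x = y then (2 : ℝ) ^ n else 0 := by
  classical
  have h1 : ∀ S : Finset (Fin n), chi S x * chi S y
      = ∏ i ∈ S, ((if x i then (-1:ℝ) else 1) * (if y i then (-1:ℝ) else 1)) := by
    intro S; rw [chi, chi, Finset.prod_mul_distrib]
  simp only [h1]
  set e : Fin n → ℝ := fun i => (if x i then (-1:ℝ) else 1) * (if y i then (-1:ℝ) else 1) with he
  have h2 : ∑ S : Finset (Fin n), ∏ i ∈ S, e i = ∏ i : Fin n, (e i + 1) := by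
    rw [Finset.prod_add]
    rw [Finset.powerset_univ]
    simp
  rw [h2]
  by_cases hxy : x = y
  · subst hxy
    simp only [if_pos rfl]
    have : ∀ i : Fin n, e i + 1 = 2 := by
      intro i; simp only [he]; cases x i <;> norm_num
    rw [Finset.prod_congr rfl (fun i _ => this i), Finset.prod_const]
    simp
  · rw [if_neg hxy]
    obtain ⟨i, hi⟩ : ∃ i, x i ≠ y i := by
      by_contra h; push_neg at h; exact hxy (funext h)
    apply Finset.prod_eq_zero (Finset.mem_univ i)
    simp only [he]
    cases hx : x i <;> cases hy : y i <;> simp_all <;> norm_num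

lemma plancherel (F G : (Fin n → Bool) → ℝ) :
    ∑ S : Finset (Fin n), four F S * four G S = (∑ x, F x * G x) / 2 ^ n := by
  classical
  have key : ∑ S : Finset (Fin n), (∑ x, F x * chi S x) * (∑ y, G y * chi S y)
      = 2 ^ n * ∑ x, F x * G x := by
    have h1 : ∀ S : Finset (Fin n), (∑ x, F x * chi S x) * (∑ y, G y * chi S y)
        = ∑ x, ∑ y, F x * G y * (chi S x * chi S y) := by
      intro S
      rw [Finset.sum_mul_sum]
      apply Finset.sum_congr rfl; intro x _
      apply Finset.sum_congr rfl; intro y _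
      ring
    simp only [h1]
    rw [Finset.sum_comm]
    have h2 : ∀ x : Fin n → Bool, ∑ S : Finset (Fin n), ∑ y, F x * G y * (chi S x * chi S y)
        = 2 ^ n * (F x * G x) := by
      intro x
      rw [Finset.sum_comm]
      have : ∀ y : Fin n → Bool, ∑ S : Finset (Fin n), F x * G y * (chi S x * chi S y)
          = F x * G y * (if x = y then (2:ℝ)^n else 0) := by
        intro y
        rw [← Finset.mul_sum, sum_chi_mul]
      simp only [this, mul_ite, mul_zero]
      rw [Finset.sum_ite_eq Finset.univ x (fun y => F x * G y * (2:ℝ)^n)]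
      simp [Finset.mem_univ]; ring
    simp only [h2]
    rw [← Finset.mul_sum]
  have hne : ((2:ℝ) ^ n) ≠ 0 := by positivity
  simp only [four, div_mul_div_comm]
  rw [← Finset.sum_div, key]
  field_simp


def flip (i : Fin n) (x : Fin n → Bool) : Fin n → Bool :=
  Function.update x i (!x i)

lemma flip_flip (i : Fin n) (x : Fin n → Bool) : flip i (flip i x) = x := by
  funext j
  simp only [flip, Function.update]
  by_cases h : j = i
  · subst h; simp
  · simp [h]

lemma flip_apply_ne (i j : Fin n) (x : Fin n → Bool) (h : j ≠ i) : flip i x j = x j := by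
  simp [flip, Function.update, h]

lemma flip_apply_self (i : Fin n) (x : Fin n → Bool) : flip i x i = !x i := by
  simp [flip]

lemma chi_flip (S : Finset (Fin n)) (i : Fin n) (x : Fin n → Bool) :
    chi S (flip i x) = (if i ∈ S then -1 else 1) * chi S x := by
  classical
  by_cases hi : i ∈ S
  · rw [if_pos hi, chi, chi, ← Finset.mul_prod_erase S _ hi, ← Finset.mul_prod_erase S _ hi]
    have h1 : ∏ j ∈ S.erase i, (if flip i x j then (-1:ℝ) else 1)
        = ∏ j ∈ S.erase i, (if x j then (-1:ℝ) else 1) := by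
      apply Finset.prod_congr rfl
      intro j hj
      rw [flip_apply_ne i j x (Finset.ne_of_mem_erase hj)]
    rw [h1, flip_apply_self]
    cases x i <;> simp <;> ring
  · rw [if_neg hi, one_mul, chi, chi]
    apply Finset.prod_congr rfl
    intro j hj
    rw [flip_apply_ne i j x (fun h => hi (h ▸ hj))]

noncomputable def flipEquiv (i : Fin n) : (Fin n → Bool) ≃ (Fin n → Bool) :=
  Function.Involutive.toPerm (flip i) (flip_flip i)

lemma four_flip (F : (Fin n → Bool) → ℝ) (i : Fin n) (S : Finset (Fin n)) :
    four (fun x => F (flip i x)) S = (if i ∈ S then -1 else 1) * four F S := by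
  classical
  rw [four, four]
  have hre : (∑ x, F (flip i x) * chi S x) = ∑ y, F y * chi S (flip i y) := by
    apply Fintype.sum_equiv (flipEquiv i)
    intro x
    have h1 : flipEquiv i x = flip i x := rfl
    rw [h1, flip_flip]
  rw [hre]
  simp only [chi_flip]
  rw [← mul_div_assoc, Finset.mul_sum]
  congr 1
  apply Finset.sum_congr rfl
  intro y _
  ring

/-- number of x where h changes when coordinate i is flipped -/
def Dc (i : Fin n) (h : (Fin n → Bool) → Bool) : ℕ :=
  (Finset.univ.filter (fun x => h x ≠ h (flip i x))).card

open Finset in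
lemma sum_sq_mem_eq (f : (Fin n → Bool) → Bool) (i : Fin n) :
    ∑ S ∈ Finset.univ.filter (fun S : Finset (Fin n) => i ∈ S),
      (four (fun x => if f x then (-1:ℝ) else 1) S) ^ 2 = (Dc i f : ℝ) / 2 ^ n := by
  classical
  set F : (Fin n → Bool) → ℝ := fun x => if f x then (-1:ℝ) else 1 with hF
  set q : Finset (Fin n) → ℝ := fun S => (four F S) ^ 2 with hq
  set A := ∑ S ∈ Finset.univ.filter (fun S : Finset (Fin n) => i ∈ S), q S with hA
  set B := ∑ S ∈ Finset.univ.filter (fun S : Finset (Fin n) => ¬ i ∈ S), q S with hB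
  have h1 : A + B = ∑ S : Finset (Fin n), q S := Finset.sum_filter_add_sum_filter_not _ _ _
  have h2 : B - A = ∑ S : Finset (Fin n), four F S * four (fun x => F (flip i x)) S := by
    rw [← Finset.sum_filter_add_sum_filter_not Finset.univ (fun S : Finset (Fin n) => i ∈ S)
        (fun S => four F S * four (fun x => F (flip i x)) S)]
    have e1 : ∑ S ∈ Finset.univ.filter (fun S : Finset (Fin n) => i ∈ S),
        four F S * four (fun x => F (flip i x)) S = -A := by
      rw [hA, ← Finset.sum_neg_distrib]
      apply Finset.sum_congr rfl
      intro S hS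
      rw [four_flip, if_pos (Finset.mem_filter.mp hS).2, hq]
      ring
    have e2 : ∑ S ∈ Finset.univ.filter (fun S : Finset (Fin n) => ¬ i ∈ S),
        four F S * four (fun x => F (flip i x)) S = B := by
      rw [hB]
      apply Finset.sum_congr rfl
      intro S hS
      rw [four_flip, if_neg (Finset.mem_filter.mp hS).2, hq]
      ring
    rw [e1, e2]
    ring
  have hP1 : A + B = (∑ x, F x * F x) / 2 ^ n := by
    rw [h1, ← plancherel F F]
    apply Finset.sum_congr rfl; intro S _; rw [hq]; ring
  have hP2 : B - A = (∑ x, F x * F (flip i x)) / 2 ^ n := by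
    rw [h2, plancherel]
  have hkey : (2:ℝ) * A = (∑ x, (F x * F x - F x * F (flip i x))) / 2 ^ n := by
    rw [Finset.sum_sub_distrib, sub_div, ← hP1, ← hP2]; ring
  have hsum : ∑ x : Fin n → Bool, (F x * F x - F x * F (flip i x))
      = 2 * (Dc i f : ℝ) := by
    rw [Dc]
    rw [Finset.card_filter]
    push_cast
    rw [Finset.mul_sum]
    apply Finset.sum_congr rfl
    intro x _
    by_cases h : f x = f (flip i x)
    · simp [hF, h]
    · have : F x * F (flip i x) = -1 := by
        simp only [hF]
        cases h1 : f x <;> cases h2 : f (flip i x) <;> simp_all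
      have hFF : F x * F x = 1 := by simp only [hF]; cases f x <;> norm_num
      rw [hFF, this, if_pos h]
      norm_num
  have : (2:ℝ) * A = 2 * ((Dc i f : ℝ) / 2 ^ n) := by
    rw [hkey, hsum]; ring
  linarith


open Finset in
lemma total_influence (f : (Fin n → Bool) → Bool) :
    ∑ S : Finset (Fin n), (S.card : ℝ) * (four (fun x => if f x then (-1:ℝ) else 1) S) ^ 2
      = ∑ i : Fin n, (Dc i f : ℝ) / 2 ^ n := by
  classical
  set q : Finset (Fin n) → ℝ := fun S => (four (fun x => if f x then (-1:ℝ) else 1) S) ^ 2 with hq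
  have h1 : ∀ S : Finset (Fin n), (S.card : ℝ) * q S = ∑ i ∈ S, q S := by
    intro S; rw [Finset.sum_const, nsmul_eq_mul]
  have h2 : ∀ S : Finset (Fin n), ∑ i ∈ S, q S = ∑ i : Fin n, (if i ∈ S then q S else 0) := by
    intro S
    rw [← Finset.sum_filter]
    congr 1
    ext i; simp
  calc ∑ S : Finset (Fin n), (S.card : ℝ) * q S
      = ∑ S : Finset (Fin n), ∑ i : Fin n, (if i ∈ S then q S else 0) := by
        apply Finset.sum_congr rfl; intro S _; rw [h1, h2]
    _ = ∑ i : Fin n, ∑ S : Finset (Fin n), (if i ∈ S then q S else 0) := Finset.sum_comm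
    _ = ∑ i : Fin n, (Dc i f : ℝ) / 2 ^ n := by
        apply Finset.sum_congr rfl; intro i _
        rw [← Finset.sum_filter, hq]
        exact sum_sq_mem_eq f i

open Finset in
lemma sum_split (i : Fin n) {M : Type*} [AddCommMonoid M] (h : (Fin n → Bool) → M) :
    ∑ x, h x = ∑ x ∈ Finset.univ.filter (fun x => x i = false),
      (h x + h (Function.update x i true)) := by
  classical
  rw [← Finset.sum_filter_add_sum_filter_not Finset.univ (fun x => x i = false) h,
    Finset.sum_add_distrib]
  congr 1
  have key : ∀ (a : Fin n → Bool) (b c : Bool), a i = c →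
      Function.update (Function.update a i b) i c = a := by
    intro a b c hc
    funext j
    by_cases hj : j = i
    · subst hj; simp [hc]
    · simp [Function.update, hj]
  apply Finset.sum_nbij' (fun x => Function.update x i false)
    (fun x => Function.update x i true)
  · intro a ha; simp
  · intro a ha; simp
  · intro a ha
    simp only [mem_filter, mem_univ, true_and] at ha
    exact key a false true (by simpa using ha)
  · intro a ha
    simp only [mem_filter, mem_univ, true_and] at ha
    exact key a true false ha
  · intro a ha
    simp only [mem_filter, mem_univ, true_and] at ha
    rw [key a false true (by simpa using ha)]

lemma le_update_true (x : Fin n → Bool) (i : Fin n) : x ≤ Function.update x i true := by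
  intro j
  by_cases hj : j = i
  · subst hj; simp
  · simp [Function.update, hj]

open Finset in
lemma mono_first (g : (Fin n → Bool) → Bool) (hg : Monotone g) (i : Fin n) :
    four (fun x => if g x then (-1:ℝ) else 1) {i} = (Dc i g : ℝ) / 2 ^ n := by
  classical
  set G : (Fin n → Bool) → ℝ := fun x => if g x then (-1:ℝ) else 1 with hG
  have hchi : ∀ x : Fin n → Bool, chi {i} x = (if x i then (-1:ℝ) else 1) := by
    intro x; simp [chi]
  have hnum : (∑ x, G x * chi {i} x)
      = ∑ x ∈ Finset.univ.filter (fun x => x i = false),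
        (if g x ≠ g (Function.update x i true) then (2:ℝ) else 0) := by
    rw [sum_split i (fun x => G x * chi {i} x)]
    apply Finset.sum_congr rfl
    intro x hx
    simp only [mem_filter, mem_univ, true_and] at hx
    rw [hchi, hchi, hx]
    simp only [Function.update_self]
    have hle : g x ≤ g (Function.update x i true) := hg (le_update_true x i)
    cases h1 : g x <;> cases h2 : g (Function.update x i true)
    · simp [hG, h1, h2]
    · simp [hG, h1, h2]; norm_num
    · rw [h1, h2] at hle; exact absurd hle (by decide)
    · simp [hG, h1, h2]
  have hDc : (Dc i g : ℝ)
      = ∑ x ∈ Finset.univ.filter (fun x => x i = false),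
        (if g x ≠ g (Function.update x i true) then (2:ℝ) else 0) := by
    rw [Dc, Finset.card_filter]
    push_cast
    rw [sum_split i (fun x => if g x ≠ g (flip i x) then (1:ℝ) else 0)]
    apply Finset.sum_congr rfl
    intro x hx
    simp only [mem_filter, mem_univ, true_and] at hx
    have e1 : flip i x = Function.update x i true := by
      simp [flip, hx]
    have e2 : flip i (Function.update x i true) = x := by
      rw [← e1, flip_flip]
    rw [e1, e2]
    by_cases h : g x = g (Function.update x i true)
    · simp [h]
    · rw [if_pos h, if_pos (Ne.symm h), if_pos h]
      norm_num
  rw [four, hnum, hDc]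

open Finset in
lemma parseval_bool (g : (Fin n → Bool) → Bool) :
    ∑ S : Finset (Fin n), (four (fun x => if g x then (-1:ℝ) else 1) S) ^ 2 = 1 := by
  have h1 : ∑ S : Finset (Fin n), (four (fun x => if g x then (-1:ℝ) else 1) S) ^ 2
      = (∑ x : Fin n → Bool, (if g x then (-1:ℝ) else 1) * (if g x then (-1:ℝ) else 1)) / 2^n := by
    rw [← plancherel]
    apply Finset.sum_congr rfl; intro S _; ring
  rw [h1]
  have h2 : ∀ x : Fin n → Bool, (if g x then (-1:ℝ) else 1) * (if g x then (-1:ℝ) else 1) = 1 := by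
    intro x; cases g x <;> norm_num
  rw [Finset.sum_congr rfl (fun x _ => h2 x), Finset.sum_const]
  simp [Finset.card_univ]

open Finset in
lemma mono_total_bound (g : (Fin n → Bool) → Bool) (hg : Monotone g) :
    ∑ i : Fin n, (Dc i g : ℝ) / 2 ^ n ≤ Real.sqrt n := by
  classical
  set a : Fin n → ℝ := fun i => four (fun x => if g x then (-1:ℝ) else 1) {i} with ha
  have key : ∀ i, (Dc i g : ℝ) / 2 ^ n = a i := fun i => (mono_first g hg i).symm
  have hnn : ∀ i, 0 ≤ a i := by
    intro i; rw [← key i]; positivity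
  have hsq : ∑ i : Fin n, (a i) ^ 2 ≤ 1 := by
    rw [← parseval_bool g]
    have himg : ∑ i : Fin n, (a i) ^ 2
        = ∑ S ∈ Finset.univ.image (fun i : Fin n => ({i} : Finset (Fin n))),
          (four (fun x => if g x then (-1:ℝ) else 1) S) ^ 2 := by
      rw [Finset.sum_image (by intro x _ y _ h; exact Finset.singleton_injective h)]
    rw [himg]
    apply Finset.sum_le_sum_of_subset_of_nonneg (Finset.subset_univ _)
    intro S _ _; positivity
  have hcs : (∑ i : Fin n, a i) ^ 2 ≤ (n : ℝ) * ∑ i : Fin n, (a i) ^ 2 := by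
    have := sq_sum_le_card_mul_sum_sq (s := (Finset.univ : Finset (Fin n))) (f := a)
    simpa using this
  have hsum_nn : 0 ≤ ∑ i : Fin n, a i := Finset.sum_nonneg (fun i _ => hnn i)
  rw [Finset.sum_congr rfl (fun i _ => key i)]
  rw [Real.le_sqrt hsum_nn (Nat.cast_nonneg n)]
  calc (∑ i : Fin n, a i) ^ 2 ≤ (n : ℝ) * ∑ i : Fin n, (a i) ^ 2 := hcs
    _ ≤ (n : ℝ) * 1 := by
        apply mul_le_mul_of_nonneg_left hsq (Nat.cast_nonneg n)
    _ = n := by ring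


----------------------------------------------------------------
-- combinatorial part
----------------------------------------------------------------


def wt (x : Fin n → Bool) : ℕ := (Finset.univ.filter (fun i => x i = true)).card

lemma wt_le (x : Fin n → Bool) : wt x ≤ n :=
  le_trans (Finset.card_filter_le _ _) (by simp)

lemma wt_lt_of_lt {x y : Fin n → Bool} (h : x < y) : wt x < wt y := by
  obtain ⟨hle, hne⟩ := lt_iff_le_and_ne.mp h
  have hsub : Finset.univ.filter (fun i => x i = true) ⊆
      Finset.univ.filter (fun i => y i = true) := by
    intro i hi
    simp only [Finset.mem_filter, Finset.mem_univ, true_and] at hi ⊢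
    have h2 := hle i
    rw [hi] at h2
    cases hyi : y i
    · rw [hyi, Bool.le_iff_imp] at h2; simp at h2
    · rfl
  apply Finset.card_lt_card
  refine ⟨hsub, ?_⟩
  intro hsub2
  apply hne
  funext i
  have h2 := hle i
  cases hx : x i
  · cases hy : y i
    · rfl
    · have := hsub2 (Finset.mem_filter.mpr ⟨Finset.mem_univ i, hy⟩)
      rw [Finset.mem_filter, hx] at this
      simp at this
  · cases hy : y i
    · rw [hx, hy, Bool.le_iff_imp] at h2; simp at h2
    · rfl

lemma strictMono_wt_ge {ℓ : ℕ} {X : Fin (ℓ+1) → (Fin n → Bool)} (hX : StrictMono X) :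
    ∀ j : ℕ, ∀ hj : j < ℓ + 1, j ≤ wt (X ⟨j, hj⟩) := by
  intro j
  induction j with
  | zero => intro hj; exact Nat.zero_le _
  | succ m ih =>
    intro hj
    have hm : m < ℓ + 1 := by omega
    have hlt : (⟨m, hm⟩ : Fin (ℓ+1)) < ⟨m+1, hj⟩ := by
      simp [Fin.lt_def]
    have := wt_lt_of_lt (hX hlt)
    have := ih hm
    omega

lemma strictMono_chain_le {ℓ : ℕ} {X : Fin (ℓ+1) → (Fin n → Bool)} (hX : StrictMono X) :
    ℓ ≤ n := by
  have h1 := strictMono_wt_ge hX ℓ (by omega)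
  have h2 := wt_le (X ⟨ℓ, by omega⟩)
  omega

lemma altCount_le {ℓ : ℕ} (f : (Fin n → Bool) → Bool) (X : Fin (ℓ+1) → (Fin n → Bool)) :
    altCount f X ≤ ℓ :=
  le_trans (Finset.card_filter_le _ _) (by simp)

def cSet (f : (Fin n → Bool) → Bool) (x : Fin n → Bool) : Set ℕ :=
  {a | ∃ (ℓ : ℕ) (X : Fin (ℓ + 1) → (Fin n → Bool)),
    StrictMono X ∧ X (Fin.last ℓ) = x ∧ altCount f X = a}

noncomputable def cFun (f : (Fin n → Bool) → Bool) (x : Fin n → Bool) : ℕ :=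
  sSup (cSet f x)

lemma zero_mem_cSet (f : (Fin n → Bool) → Bool) (x : Fin n → Bool) : 0 ∈ cSet f x := by
  refine ⟨0, fun _ => x, ?_, rfl, ?_⟩
  · intro a b hab
    have h1 := a.isLt
    have h2 := b.isLt
    exact absurd (Fin.ext (by omega) : a = b) (ne_of_lt hab)
  · simp [altCount]

lemma cSet_bddAbove (f : (Fin n → Bool) → Bool) (x : Fin n → Bool) : BddAbove (cSet f x) := by
  refine ⟨n, ?_⟩
  rintro a ⟨ℓ, X, hX, _, hc⟩
  exact hc ▸ le_trans (altCount_le f X) (strictMono_chain_le hX)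

lemma cFun_mem (f : (Fin n → Bool) → Bool) (x : Fin n → Bool) : cFun f x ∈ cSet f x :=
  Nat.sSup_mem ⟨0, zero_mem_cSet f x⟩ (cSet_bddAbove f x)

-- snoc lemmas
lemma snoc_strictMono {ℓ : ℕ} {X : Fin (ℓ+1) → (Fin n → Bool)} (hX : StrictMono X)
    {y : Fin n → Bool} (hy : X (Fin.last ℓ) < y) :
    StrictMono (Fin.snoc X y : Fin (ℓ+2) → (Fin n → Bool)) := by
  intro a b hab
  rcases Fin.eq_castSucc_or_eq_last b with ⟨b', rfl⟩ | rfl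
  · have ha : (a : ℕ) < ℓ + 1 := by
      have := Fin.lt_def.mp hab
      have := b'.isLt
      simp only [Fin.coe_castSucc] at *
      omega
    have haeq : a = Fin.castSucc ⟨(a : ℕ), ha⟩ := by
      apply Fin.ext; simp
    rw [haeq, Fin.snoc_castSucc, Fin.snoc_castSucc]
    apply hX
    rw [Fin.lt_def] at hab ⊢
    simpa using hab
  · have ha : (a : ℕ) < ℓ + 1 := by
      have := Fin.lt_def.mp hab
      simp only [Fin.val_last] at this
      omega
    have haeq : a = Fin.castSucc ⟨(a : ℕ), ha⟩ := by
      apply Fin.ext; simp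
    rw [haeq, Fin.snoc_castSucc, Fin.snoc_last]
    calc X ⟨(a:ℕ), ha⟩ ≤ X (Fin.last ℓ) := by
          apply hX.monotone
          rw [Fin.le_def]
          simp [Fin.le_last, Fin.val_last]
          omega
      _ < y := hy

lemma altCount_snoc {ℓ : ℕ} (f : (Fin n → Bool) → Bool) (X : Fin (ℓ+1) → (Fin n → Bool))
    (y : Fin n → Bool) :
    altCount f (Fin.snoc X y : Fin (ℓ+2) → (Fin n → Bool))
      = altCount f X + (if f (X (Fin.last ℓ)) ≠ f y then 1 else 0) := by
  classical
  rw [altCount, altCount, Finset.card_filter, Finset.card_filter]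
  rw [Fin.sum_univ_castSucc (fun j : Fin (ℓ+1) =>
    if f ((Fin.snoc X y : Fin (ℓ+2) → (Fin n → Bool)) j.castSucc)
      ≠ f ((Fin.snoc X y : Fin (ℓ+2) → (Fin n → Bool)) j.succ) then 1 else 0)]
  congr 1
  · apply Finset.sum_congr rfl
    intro j _
    have e1 : (j.castSucc : Fin (ℓ+1)).castSucc = (j.castSucc : Fin (ℓ+1)).castSucc := rfl
    rw [Fin.succ_castSucc]
    rw [Fin.snoc_castSucc, Fin.snoc_castSucc]
  · rw [Fin.succ_last, Fin.snoc_castSucc, Fin.snoc_last]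



lemma altSet_bddAbove (f : (Fin n → Bool) → Bool) :
    BddAbove {a | ∃ (ℓ : ℕ) (X : Fin (ℓ + 1) → (Fin n → Bool)),
      StrictMono X ∧ altCount f X = a} := by
  refine ⟨n, ?_⟩
  rintro a ⟨ℓ, X, hX, hc⟩
  exact hc ▸ le_trans (altCount_le f X) (strictMono_chain_le hX)

lemma cFun_le_k (f : (Fin n → Bool) → Bool) (k : ℕ) (hf : alt f ≤ k) (x : Fin n → Bool) :
    cFun f x ≤ k := by
  apply csSup_le ⟨0, zero_mem_cSet f x⟩
  rintro a ⟨ℓ, X, hX, hlast, hc⟩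
  have h1 : a ≤ alt f := le_csSup (altSet_bddAbove f) ⟨ℓ, X, hX, hc⟩
  omega

lemma cFun_mono (f : (Fin n → Bool) → Bool) {x y : Fin n → Bool} (h : x ≤ y) :
    cFun f x ≤ cFun f y := by
  rcases eq_or_lt_of_le h with rfl | hlt
  · exact le_refl _
  · obtain ⟨ℓ, X, hX, hlast, hc⟩ := cFun_mem f x
    have hmem : altCount f (Fin.snoc X y : Fin (ℓ+2) → (Fin n → Bool)) ∈ cSet f y :=
      ⟨ℓ+1, Fin.snoc X y, snoc_strictMono hX (hlast ▸ hlt), Fin.snoc_last _ _, rfl⟩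
    have h2 : cFun f x ≤ altCount f (Fin.snoc X y : Fin (ℓ+2) → (Fin n → Bool)) := by
      rw [altCount_snoc, hc]
      omega
    exact le_trans h2 (le_csSup (cSet_bddAbove f y) hmem)

lemma cFun_step (f : (Fin n → Bool) → Bool) {x y : Fin n → Bool} (hlt : x < y)
    (hne : f x ≠ f y) : cFun f x + 1 ≤ cFun f y := by
  obtain ⟨ℓ, X, hX, hlast, hc⟩ := cFun_mem f x
  have hmem : altCount f (Fin.snoc X y : Fin (ℓ+2) → (Fin n → Bool)) ∈ cSet f y :=
    ⟨ℓ+1, Fin.snoc X y, snoc_strictMono hX (hlast ▸ hlt), Fin.snoc_last _ _, rfl⟩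
  have h2 : cFun f x + 1 ≤ altCount f (Fin.snoc X y : Fin (ℓ+2) → (Fin n → Bool)) := by
    rw [altCount_snoc, hc, hlast, if_pos hne]
  exact le_trans h2 (le_csSup (cSet_bddAbove f y) hmem)

noncomputable def gth (f : (Fin n → Bool) → Bool) (j : ℕ) : (Fin n → Bool) → Bool :=
  fun x => decide (j ≤ cFun f x)

lemma gth_mono (f : (Fin n → Bool) → Bool) (j : ℕ) : Monotone (gth f j) := by
  intro x y h
  simp only [gth]
  rw [Bool.le_iff_imp]
  intro hx
  simp only [decide_eq_true_eq] at hx ⊢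
  exact le_trans hx (cFun_mono f h)

lemma exists_threshold (f : (Fin n → Bool) → Bool) (k : ℕ) (hf : alt f ≤ k)
    {x y : Fin n → Bool} (hxy : x < y) (hne : f x ≠ f y) :
    ∃ j ∈ Finset.Icc 1 k, gth f j x ≠ gth f j y := by
  have hstep := cFun_step f hxy hne
  have hky := cFun_le_k f k hf y
  refine ⟨cFun f y, Finset.mem_Icc.mpr ⟨by omega, hky⟩, ?_⟩
  simp only [gth]
  have h1 : decide (cFun f y ≤ cFun f x) = false := by
    simp only [decide_eq_false_iff_not]
    omega
  have h2 : decide (cFun f y ≤ cFun f y) = true := by simp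
  rw [h1, h2]
  simp

lemma lt_update (x : Fin n → Bool) (i : Fin n) (h : x i = false) :
    x < Function.update x i true := by
  rw [lt_iff_le_and_ne]
  refine ⟨le_update_true x i, fun heq => ?_⟩
  have := congrFun heq i
  rw [Function.update_self, h] at this
  simp at this

open Finset in
lemma Dc_le_sum (f : (Fin n → Bool) → Bool) (k : ℕ) (hf : alt f ≤ k) (i : Fin n) :
    Dc i f ≤ ∑ j ∈ Finset.Icc 1 k, Dc i (gth f j) := by
  classical
  simp only [Dc, Finset.card_filter]
  rw [Finset.sum_comm]
  apply Finset.sum_le_sum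
  intro x _
  by_cases h : f x = f (flip i x)
  · simp [h]
  · rw [if_pos h]
    have hex : ∃ j ∈ Finset.Icc 1 k, gth f j x ≠ gth f j (flip i x) := by
      cases hxi : x i
      · have e1 : flip i x = Function.update x i true := by simp [flip, hxi]
        rw [e1]
        apply exists_threshold f k hf (lt_update x i hxi)
        rw [← e1]; exact h
      · have hui : flip i x i = false := by rw [flip_apply_self, hxi]; rfl
        have e1 : Function.update (flip i x) i true = x := by
          have h2 : flip i (flip i x) = Function.update (flip i x) i true := by
            rw [flip, hui]
            rfl
          rw [← h2, flip_flip]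
        obtain ⟨j, hj, hne⟩ := exists_threshold f k hf (lt_update (flip i x) i hui)
          (show f (flip i x) ≠ f (Function.update (flip i x) i true) by
            rw [e1]; exact Ne.symm h)
        rw [e1] at hne
        exact ⟨j, hj, Ne.symm hne⟩
    obtain ⟨j0, hj0, hne0⟩ := hex
    calc (1 : ℕ) = (if gth f j0 x ≠ gth f j0 (flip i x) then 1 else 0) := by rw [if_pos hne0]
      _ ≤ ∑ j ∈ Finset.Icc 1 k, (if gth f j x ≠ gth f j (flip i x) then 1 else 0) :=
          Finset.single_le_sum
            (f := fun j => if gth f j x ≠ gth f j (flip i x) then 1 else 0)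
            (fun _ _ => Nat.zero_le _) hj0

open Finset in
lemma influence_bound (f : (Fin n → Bool) → Bool) (k : ℕ) (hk : 1 ≤ k)
    (hf : alt f ≤ k) :
    ∑ i : Fin n, (Dc i f : ℝ) / 2 ^ n ≤ (k : ℝ) * Real.sqrt n := by
  have h1 : ∀ i : Fin n, (Dc i f : ℝ) ≤ ∑ j ∈ Finset.Icc 1 k, (Dc i (gth f j) : ℝ) := by
    intro i
    have := Dc_le_sum f k hf i
    push_cast at this ⊢
    exact_mod_cast this
  calc ∑ i : Fin n, (Dc i f : ℝ) / 2 ^ n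
      ≤ ∑ i : Fin n, (∑ j ∈ Finset.Icc 1 k, (Dc i (gth f j) : ℝ)) / 2 ^ n := by
        apply Finset.sum_le_sum
        intro i _
        gcongr
        exact h1 i
    _ = ∑ j ∈ Finset.Icc 1 k, ∑ i : Fin n, (Dc i (gth f j) : ℝ) / 2 ^ n := by
        rw [← Finset.sum_comm]
        apply Finset.sum_congr rfl
        intro i _
        rw [Finset.sum_div]
    _ ≤ ∑ j ∈ Finset.Icc 1 k, Real.sqrt n := by
        apply Finset.sum_le_sum
        intro j _
        exact mono_total_bound (gth f j) (gth_mono f j)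
    _ = (k : ℝ) * Real.sqrt n := by
        rw [Finset.sum_const, Nat.card_Icc]
        simp [nsmul_eq_mul]

end Stmt12Aux

open scoped Classical in
/-- A `k`-alternating function has Fourier tail `∑_{|S| > k√n/ε} F̂(S)² ≤ ε`. -/
theorem stmt12 {n : ℕ} (k : ℕ) (hk : 1 ≤ k) (ε : ℝ) (hε0 : 0 < ε) (hε1 : ε ≤ 1)
    (f : (Fin n → Bool) → Bool) (hf : alt f ≤ k) :
    ∑ S ∈ Finset.univ.filter
        (fun S : Finset (Fin n) => (k : ℝ) * Real.sqrt n / ε < (S.card : ℝ)),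
      (booleanFourier f S) ^ 2 ≤ ε := by
  classical
  by_cases hn : n = 0
  · subst hn
    have hempty : (Finset.univ.filter
        (fun S : Finset (Fin 0) => (k : ℝ) * Real.sqrt 0 / ε < (S.card : ℝ))) = ∅ := by
      ext S
      simp only [Finset.mem_filter, Finset.mem_univ, true_and, Finset.notMem_empty, iff_false]
      have h1 : S.card = 0 := le_antisymm (le_trans (Finset.card_le_univ S) (by simp)) (Nat.zero_le _)
      rw [h1]
      norm_num
    simp only [Nat.cast_zero]
    rw [hempty, Finset.sum_empty]
    linarith
  · have hn1 : 1 ≤ n := Nat.one_le_iff_ne_zero.mpr hn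
    have hnpos : (0:ℝ) < n := by exact_mod_cast hn1
    have hsqrt : 0 < Real.sqrt n := Real.sqrt_pos.mpr hnpos
    have hkpos : (0:ℝ) < k := by exact_mod_cast hk
    set t : ℝ := (k : ℝ) * Real.sqrt n / ε with ht
    have htpos : 0 < t := by rw [ht]; positivity
    have hB : ∀ S : Finset (Fin n),
        booleanFourier f S = Stmt12Aux.four (fun x => if f x then (-1:ℝ) else 1) S :=
      fun _ => rfl
    have key : ∑ S : Finset (Fin n), (S.card : ℝ) * (booleanFourier f S) ^ 2
        ≤ (k : ℝ) * Real.sqrt n := by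
      simp only [hB]
      rw [Stmt12Aux.total_influence f]
      exact Stmt12Aux.influence_bound f k hk hf
    have hnn : ∀ S : Finset (Fin n), 0 ≤ (S.card : ℝ) / t * (booleanFourier f S) ^ 2 := by
      intro S; positivity
    calc ∑ S ∈ Finset.univ.filter
          (fun S : Finset (Fin n) => t < (S.card : ℝ)), (booleanFourier f S) ^ 2
        ≤ ∑ S ∈ Finset.univ.filter
          (fun S : Finset (Fin n) => t < (S.card : ℝ)),
            (S.card : ℝ) / t * (booleanFourier f S) ^ 2 := by
          apply Finset.sum_le_sum
          intro S hS
          have hcard : t < (S.card : ℝ) := (Finset.mem_filter.mp hS).2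
          have h1 : 1 ≤ (S.card : ℝ) / t := (one_le_div htpos).mpr (le_of_lt hcard)
          nlinarith [sq_nonneg (booleanFourier f S)]
      _ ≤ ∑ S : Finset (Fin n), (S.card : ℝ) / t * (booleanFourier f S) ^ 2 :=
          Finset.sum_le_sum_of_subset_of_nonneg (Finset.subset_univ _) (fun S _ _ => hnn S)
      _ = (1 / t) * ∑ S : Finset (Fin n), (S.card : ℝ) * (booleanFourier f S) ^ 2 := by
          rw [Finset.mul_sum]
          apply Finset.sum_congr rfl
          intro S _
          ring
      _ ≤ (1 / t) * ((k : ℝ) * Real.sqrt n) := by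
          apply mul_le_mul_of_nonneg_left key
          positivity
      _ = ε := by
          rw [ht]
          have hne : (k : ℝ) * Real.sqrt n ≠ 0 := by positivity
          field_simp
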